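/- arXiv:1309.0403 — 6 statements merged into one kernel-verified Lean document; each statement's English description precedes it below -/
import Mathlib

section
/- Let q be a prime power, let 0 < k', k ≤ n, let U₀ = rs[ I_{k'} | 0_{k'×(n−k')} ] be the row space of the k'×n matrix whose left block is the identity and right block is zero, and let τ satisfy |k − k'| ≤ τ < min(k' + k, 2n − (k' + k)) with (k + k' − τ)/2 ∈ ℤ. Then for every k×n matrix V over F_q of rank k, the subspace rs(V) satisfies d_S(U₀, rs(V)) ≤ τ if and only if M_{i₁,…,i_k}(V) = 0 for every index tuple (i₁ < … < i_k) that is NOT ⪯ ((k'−k+τ)/2 + 1, …, k', n − (k−k'+τ)/2 + 1, …, n) in the Bruhat order; equivalently, if and only if every k×k minor of V whose column set contains at least (k−k'+τ)/2 + 1 columns with index greater than k' vanishes. -/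
open Submodule Module Matrix

/-- The standard subspace `U₀ = rs [I_{k'} | 0]`, spanned by the first `k'`
standard basis vectors of `F^n`. -/
def stdSubspace (F : Type*) [Field F] (n k' : ℕ) (h : k' ≤ n) :
    Submodule F (Fin n → F) :=
  Submodule.span F
    (Set.range fun i : Fin k' => (Pi.single (Fin.castLE h i) (1 : F) : Fin n → F))

/-- The row space of a matrix. -/
def rowSpace (F : Type*) [Field F] {k n : ℕ} (M : Matrix (Fin k) (Fin n) F) :
    Submodule F (Fin n → F) :=
  Submodule.span F (Set.range fun i : Fin k => M i)

section Aux

variable {F : Type*} [Field F] {n k k' : ℕ}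


/-- projection killing the first `k'` coordinates -/
def maskMap (F : Type*) [Field F] (n k' : ℕ) : (Fin n → F) →ₗ[F] (Fin n → F) where
  toFun v := fun j => if k' ≤ (j : ℕ) then v j else 0
  map_add' u v := by funext j; by_cases h : k' ≤ (j : ℕ) <;> simp [h]
  map_smul' c v := by funext j; by_cases h : k' ≤ (j : ℕ) <;> simp [h]

lemma maskMap_apply (v : Fin n → F) (j : Fin n) :
    maskMap F n k' v j = if k' ≤ (j : ℕ) then v j else 0 := rfl

lemma stdSubspace_eq_ker (h : k' ≤ n) :
    Submodule.span F
      (Set.range fun i : Fin k' => (Pi.single (Fin.castLE h i) (1 : F) : Fin n → F))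
      = LinearMap.ker (maskMap F n k') := by
  apply le_antisymm
  · rw [Submodule.span_le]
    rintro _ ⟨i, rfl⟩
    simp only [SetLike.mem_coe, LinearMap.mem_ker]
    funext j
    rw [maskMap_apply]
    split_ifs with hj
    · rw [Pi.single_apply, if_neg, Pi.zero_apply]
      intro hji
      rw [hji] at hj
      simp only [Fin.coe_castLE] at hj
      exact absurd hj (not_le.2 i.2)
    · rfl
  · intro v hv
    simp only [LinearMap.mem_ker] at hv
    have hv' : ∀ j : Fin n, k' ≤ (j : ℕ) → v j = 0 := by
      intro j hj
      have := congr_fun hv j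
      rw [maskMap_apply, if_pos hj] at this
      exact this
    have hrep : v = ∑ j : Fin n, v j • (Pi.single j (1 : F) : Fin n → F) := by
      funext j'
      rw [Finset.sum_apply]
      simp [Pi.single_apply]
    rw [hrep]
    apply Submodule.sum_mem
    intro j _
    by_cases hj : (j : ℕ) < k'
    · apply Submodule.smul_mem
      apply Submodule.subset_span
      refine ⟨⟨(j : ℕ), hj⟩, ?_⟩
      have hje : Fin.castLE h ⟨(j : ℕ), hj⟩ = j := by ext; rfl
      show (Pi.single (Fin.castLE h ⟨(j : ℕ), hj⟩) (1:F) : Fin n → F) = _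
      rw [hje]
    · rw [hv' j (le_of_not_gt hj)]
      simp

lemma finrank_stdSubspace (h : k' ≤ n) :
    finrank F (Submodule.span F
      (Set.range fun i : Fin k' => (Pi.single (Fin.castLE h i) (1 : F) : Fin n → F))) = k' := by
  have hli : LinearIndependent F
      (fun i : Fin k' => (Pi.single (Fin.castLE h i) (1 : F) : Fin n → F)) := by
    have : (fun i : Fin k' => (Pi.single (Fin.castLE h i) (1 : F) : Fin n → F))
        = (fun j : Fin n => (Pi.single j (1 : F) : Fin n → F)) ∘ Fin.castLE h := rfl
    rw [this]
    apply LinearIndependent.comp _ _ (Fin.castLE_injective h)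
    have := (Pi.basisFun F (Fin n)).linearIndependent
    convert this using 1
    funext j
    simp [Pi.basisFun_apply]
  rw [finrank_span_eq_card hli, Fintype.card_fin]



lemma rank_nullity_mask (P : Submodule F (Fin n → F)) :
    finrank F (P.map (maskMap F n k'))
      + finrank F ↥(LinearMap.ker (maskMap F n k') ⊓ P) = finrank F P := by
  have h := LinearMap.finrank_range_add_finrank_ker ((maskMap F n k').domRestrict P)
  rw [LinearMap.range_domRestrict, LinearMap.ker_domRestrict] at h
  rw [← h]
  congr 1
  rw [← Submodule.finrank_map_subtype_eq P, Submodule.map_comap_subtype, inf_comm]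

def maskMatrix (V : Matrix (Fin k) (Fin n) F) (k' : ℕ) : Matrix (Fin k) (Fin n) F :=
  Matrix.of fun i j => if k' ≤ (j : ℕ) then V i j else 0

lemma map_mask_rowSpace (V : Matrix (Fin k) (Fin n) F) :
    (Submodule.span F (Set.range fun i : Fin k => V i)).map (maskMap F n k')
      = Submodule.span F (Set.range fun i : Fin k => maskMatrix V k' i) := by
  rw [Submodule.map_span]
  congr 1
  rw [← Set.range_comp]
  rfl

lemma rank_mask_eq (V : Matrix (Fin k) (Fin n) F) :
    (maskMatrix V k').rank
      = finrank F (Submodule.span F (Set.image Vᵀ {j : Fin n | k' ≤ (j : ℕ)})) := by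
  rw [Matrix.rank_eq_finrank_span_cols]
  have hspan : Submodule.span F (Set.range (maskMatrix V k')ᵀ)
      = Submodule.span F (Set.image Vᵀ {j : Fin n | k' ≤ (j : ℕ)}) := by
    apply le_antisymm
    · rw [Submodule.span_le]
      rintro _ ⟨j, rfl⟩
      by_cases hj : k' ≤ (j : ℕ)
      · apply Submodule.subset_span
        refine ⟨j, show j ∈ {j : Fin n | k' ≤ (j : ℕ)} from hj, ?_⟩
        funext i
        simp [maskMatrix, Matrix.transpose_apply, hj]
      · have : (maskMatrix V k')ᵀ j = 0 := by
          funext i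
          simp [maskMatrix, Matrix.transpose_apply, hj]
        rw [this]
        simp
    · rw [Submodule.span_le]
      rintro _ ⟨j, hj, rfl⟩
      rw [Set.mem_setOf_eq] at hj
      apply Submodule.subset_span
      refine ⟨j, ?_⟩
      funext i
      simp [maskMatrix, Matrix.transpose_apply, hj]

  unfold Matrix.col
  rw [hspan]


lemma minors_vanish_of_rank_le {V : Matrix (Fin k) (Fin n) F} {t : ℕ}
    (hr : finrank F (Submodule.span F (Set.image Vᵀ {j : Fin n | k' ≤ (j : ℕ)})) ≤ t)
    (c : Fin k → Fin n)
    (hcard : t + 1 ≤ (Finset.univ.filter fun l : Fin k => k' ≤ (c l : ℕ)).card) :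
    (V.submatrix id c).det = 0 := by
  by_contra hdet
  have hU : IsUnit (V.submatrix id c) := (Matrix.isUnit_iff_isUnit_det _).2 (isUnit_iff_ne_zero.2 hdet)
  have hli : LinearIndependent F (fun l : Fin k => (V.submatrix id c)ᵀ l) :=
    Matrix.linearIndependent_cols_iff_isUnit.2 hU
  have hli' : LinearIndependent F (fun l : Fin k => Vᵀ (c l)) := hli
  set L := Finset.univ.filter fun l : Fin k => k' ≤ (c l : ℕ) with hL
  set p := Submodule.span F (Set.image Vᵀ {j : Fin n | k' ≤ (j : ℕ)}) with hp
  have hmem : ∀ l : L, Vᵀ (c (l : Fin k)) ∈ p := by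
    rintro ⟨l, hl⟩
    apply Submodule.subset_span
    exact ⟨c l, by simpa using (Finset.mem_filter.1 hl).2, rfl⟩
  have hli2 : LinearIndependent F (fun l : L => (⟨Vᵀ (c (l : Fin k)), hmem l⟩ : p)) := by
    apply LinearIndependent.of_comp p.subtype
    exact (hli'.comp Subtype.val Subtype.val_injective)
  have := hli2.fintype_card_le_finrank
  rw [Fintype.card_coe] at this
  omega

lemma rank_le_of_minors_vanish {V : Matrix (Fin k) (Fin n) F} {t : ℕ}
    (hk : 0 < k) (hkn : k ≤ n) (hV : V.rank = k)
    (h : ∀ c : Fin k → Fin n, StrictMono c →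
        t + 1 ≤ (Finset.univ.filter fun l : Fin k => k' ≤ (c l : ℕ)).card →
        (V.submatrix id c).det = 0) :
    finrank F (Submodule.span F (Set.image Vᵀ {j : Fin n | k' ≤ (j : ℕ)})) ≤ t := by
  by_contra hr
  push_neg at hr
  have hn : 0 < n := lt_of_lt_of_le hk hkn
  set T : Set (Fin k → F) := Set.image Vᵀ {j : Fin n | k' ≤ (j : ℕ)} with hT
  -- independent subset of T of size > t
  obtain ⟨b, hbT, hbspan, hbli⟩ := exists_linearIndependent F T
  have hbfin : b.Finite := ((Set.finite_range Vᵀ).subset (Set.image_subset_range _ _)).subset hbT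
  haveI : Fintype b := hbfin.fintype
  have hbcard : b.toFinset.card = finrank F (Submodule.span F T) := by
    rw [← finrank_span_set_eq_card hbli, hbspan]
  -- extend to a spanning independent set inside the columns
  have hbR : b ⊆ Set.range Vᵀ := hbT.trans (Set.image_subset_range _ _)
  set B : Set (Fin k → F) := LinearIndepOn.extend (show LinearIndepOn F id b from hbli) hbR with hB
  have hBR : B ⊆ Set.range Vᵀ := LinearIndepOn.extend_subset (show LinearIndepOn F id b from hbli) hbR
  have hbB : b ⊆ B := LinearIndepOn.subset_extend (show LinearIndepOn F id b from hbli) hbR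
  have hBli : LinearIndependent F ((↑) : B → (Fin k → F)) := LinearIndepOn.linearIndepOn_extend (show LinearIndepOn F id b from hbli) hbR
  have hBspan : Submodule.span F B = ⊤ := by
    have h1 : Submodule.span F (Set.range Vᵀ) = ⊤ := by
      apply Submodule.eq_top_of_finrank_eq
      change finrank F (span F (Set.range V.col)) = _
      rw [← Matrix.rank_eq_finrank_span_cols, hV, Module.finrank_fintype_fun_eq_card,
        Fintype.card_fin]
    rw [eq_top_iff, ← h1]
    exact Submodule.span_le.2 (LinearIndepOn.subset_span_extend (show LinearIndepOn F id b from hbli) hbR)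
  have hBfin : B.Finite := (Set.finite_range Vᵀ).subset hBR
  haveI : Fintype B := hBfin.fintype
  have hBcard : B.toFinset.card = k := by
    have h2 := finrank_span_set_eq_card hBli
    rw [hBspan] at h2
    simp only [finrank_top] at h2
    rw [← h2, Module.finrank_fintype_fun_eq_card, Fintype.card_fin]
  have hchoice : ∀ v, v ∈ B → ∃ j : Fin n, Vᵀ j = v ∧ (v ∈ T → k' ≤ (j : ℕ)) := by
    intro v hv
    by_cases hvT : v ∈ T
    · obtain ⟨j, hj, rfl⟩ := hvT
      exact ⟨j, rfl, fun _ => hj⟩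
    · obtain ⟨j, rfl⟩ := hBR hv
      exact ⟨j, rfl, fun hmem => absurd hmem hvT⟩
  haveI : Nonempty (Fin n) := ⟨⟨0, hn⟩⟩
  choose! idx hidx1 hidx2 using hchoice
  have hinj : Set.InjOn idx B := by
    intro v hv w hw he
    rw [← hidx1 v hv, ← hidx1 w hw, he]
  have hinj' : Set.InjOn idx ↑B.toFinset := by rw [Set.coe_toFinset]; exact hinj
  set I : Finset (Fin n) := B.toFinset.image idx with hI
  have hIcard : I.card = k := by
    rw [hI, Finset.card_image_of_injOn hinj', hBcard]
  set c : Fin k → Fin n := fun l => (I.orderIsoOfFin hIcard l : Fin n) with hc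
  have hcmono : StrictMono c := by
    intro a b hab
    exact Subtype.coe_lt_coe.2 ((I.orderIsoOfFin hIcard).strictMono hab)
  have hcI : ∀ l, c l ∈ I := fun l => (I.orderIsoOfFin hIcard l).2
  have hVc : ∀ l, Vᵀ (c l) ∈ B ∧ idx (Vᵀ (c l)) = c l := by
    intro l
    obtain ⟨v, hv, he⟩ := Finset.mem_image.1 (hcI l)
    have hvB : v ∈ B := Set.mem_toFinset.1 hv
    rw [← he, hidx1 v hvB]
    exact ⟨hvB, rfl⟩
  have hmem : ∀ l, Vᵀ (c l) ∈ B := fun l => (hVc l).1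
  have hsinj : Function.Injective (fun l : Fin k => (⟨Vᵀ (c l), hmem l⟩ : B)) := by
    intro a b hab
    have h3 : Vᵀ (c a) = Vᵀ (c b) := congrArg Subtype.val hab
    have h4 : c a = c b := by rw [← (hVc a).2, ← (hVc b).2, h3]
    exact hcmono.injective h4
  have hcols : LinearIndependent F (fun l : Fin k => Vᵀ (c l)) :=
    hBli.comp _ hsinj
  have hdetne : (V.submatrix id c).det ≠ 0 := by
    have h5 : LinearIndependent F (fun l : Fin k => (V.submatrix id c)ᵀ l) := hcols
    have hU := Matrix.linearIndependent_cols_iff_isUnit.1 h5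
    exact isUnit_iff_ne_zero.1 ((Matrix.isUnit_iff_isUnit_det _).1 hU)
  apply hdetne
  apply h c hcmono
  have himgI : Finset.univ.image c = I := by
    apply Finset.eq_of_subset_of_card_le
    · intro j hj
      obtain ⟨l, _, rfl⟩ := Finset.mem_image.1 hj
      exact hcI l
    · rw [hIcard, Finset.card_image_of_injective _ hcmono.injective, Finset.card_univ,
        Fintype.card_fin]
  have hfiltercard : (Finset.univ.filter fun l : Fin k => k' ≤ (c l : ℕ)).card
      = (I.filter fun j : Fin n => k' ≤ (j : ℕ)).card := by
    rw [← himgI, Finset.filter_image, Finset.card_image_of_injective _ hcmono.injective]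
  have hsub : b.toFinset.image idx ⊆ I.filter fun j : Fin n => k' ≤ (j : ℕ) := by
    intro j hj
    obtain ⟨v, hv, rfl⟩ := Finset.mem_image.1 hj
    have hvb : v ∈ b := Set.mem_toFinset.1 hv
    exact Finset.mem_filter.2 ⟨Finset.mem_image.2 ⟨v, Set.mem_toFinset.2 (hbB hvb), rfl⟩,
      hidx2 v (hbB hvb) (hbT hvb)⟩
  have hb2 : b.toFinset.card ≤ (I.filter fun j : Fin n => k' ≤ (j : ℕ)).card := by
    have hinjb : Set.InjOn idx ↑b.toFinset := fun v hv w hw he =>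
      hinj (hbB (by simpa using hv)) (hbB (by simpa using hw)) he
    calc b.toFinset.card = (b.toFinset.image idx).card :=
          (Finset.card_image_of_injOn hinjb).symm
      _ ≤ _ := Finset.card_le_card hsub
  omega

end Aux

/-- Theorem 3 (subspace distance): for `U₀ = rs[I_{k'} | 0]` and
`|k-k'| ≤ τ < min(k'+k, 2n-(k'+k))` with `k+k'-τ` even, a rank-`k` matrix `V`
satisfies `d_S(U₀, rs V) ≤ τ` iff every `k×k` minor of `V` whose column set
contains at least `(k-k'+τ)/2 + 1` columns with index greater than `k'`
vanishes (equivalently, iff `M_{i₁,…,i_k}(V) = 0` for every tuple which is not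
`⪯ ((k'-k+τ)/2+1, …, k', n-(k-k'+τ)/2+1, …, n)` in the Bruhat order). -/
theorem statement7 (F : Type*) [Field F] [Fintype F] (n k k' τ : ℕ)
    (hk : 0 < k) (hk' : 0 < k') (hkn : k ≤ n) (hk'n : k' ≤ n)
    (hτ1 : (k : ℤ) - (k' : ℤ) ≤ (τ : ℤ)) (hτ2 : (k' : ℤ) - (k : ℤ) ≤ (τ : ℤ))
    (hτ3 : (τ : ℤ) < min ((k' : ℤ) + (k : ℤ)) (2 * (n : ℤ) - ((k' : ℤ) + (k : ℤ))))
    (hpar : Even ((k : ℤ) + (k' : ℤ) - (τ : ℤ)))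
    (V : Matrix (Fin k) (Fin n) F) (hV : V.rank = k) :
    ((Module.finrank F ↥(stdSubspace F n k' hk'n) : ℤ)
        + Module.finrank F ↥(rowSpace F V)
        - 2 * Module.finrank F ↥(stdSubspace F n k' hk'n ⊓ rowSpace F V)
      ≤ (τ : ℤ))
    ↔ ∀ c : Fin k → Fin n, StrictMono c →
        (k + τ - k') / 2 + 1 ≤
          (Finset.univ.filter fun l : Fin k => k' ≤ (c l : ℕ)).card →
        (V.submatrix id c).det = 0 := by
  set r : ℕ := finrank F (Submodule.span F (Set.image Vᵀ {j : Fin n | k' ≤ (j : ℕ)})) with hr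
  set d : ℕ := finrank F ↥(stdSubspace F n k' hk'n ⊓ rowSpace F V) with hd
  have hU : finrank F ↥(stdSubspace F n k' hk'n) = k' := finrank_stdSubspace hk'n
  have hP : finrank F ↥(rowSpace F V) = k := by
    rw [rowSpace]
    change finrank F (span F (Set.range V.row)) = k
    rw [← Matrix.rank_eq_finrank_span_row, hV]
  have hrd : r + d = k := by
    have h1 := rank_nullity_mask (k' := k') (rowSpace F V)
    have e1 : (rowSpace F V).map (maskMap F n k')
        = Submodule.span F (Set.range fun i : Fin k => maskMatrix V k' i) :=
      map_mask_rowSpace V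
    have e2 : LinearMap.ker (maskMap F n k') = stdSubspace F n k' hk'n :=
      (stdSubspace_eq_ker hk'n).symm
    have e3 : finrank F ↥(Submodule.span F (Set.range fun i : Fin k => maskMatrix V k' i))
        = r := by
      rw [hr, ← rank_mask_eq, Matrix.rank_eq_finrank_span_row]
      rfl
    rw [e1, e2, hP, e3] at h1
    rw [hd]
    exact h1
  obtain ⟨m, hm⟩ := hpar
  have hrt : ((finrank F ↥(stdSubspace F n k' hk'n) : ℤ)
        + finrank F ↥(rowSpace F V)
        - 2 * finrank F ↥(stdSubspace F n k' hk'n ⊓ rowSpace F V)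
      ≤ (τ : ℤ)) ↔ r ≤ (k + τ - k') / 2 := by
    rw [hU, hP, ← hd]
    omega
  rw [hrt]
  constructor
  · intro hle c _ hcard
    exact minors_vanish_of_rank_le hle c hcard
  · intro hall
    exact rank_le_of_minors_vanish hk hkn hV hall
end

section
/- Let q be a prime power, let 0 < k', k ≤ n, let U₀ = rs[ I_{k'} | 0_{k'×(n−k')} ], and let t satisfy |k' − k| ≤ t < min(max(k',k), n − k + 1). Then for every k×n matrix V over F_q of rank k, the subspace rs(V) satisfies d_I(U₀, rs(V)) ≤ t if and only if M_{i₁,…,i_k}(V) = 0 for every index tuple (i₁ < … < i_k) that is NOT ⪯ (k' − max(k',k) + t + 1, …, k', n − k + max(k',k) − t + 1, …, n) in the Bruhat order; equivalently, if and only if every k×k minor of V whose column set contains at least min(0, k − k') + t + 1 columns with index greater than k' vanishes. -/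
open Module Submodule Matrix

section aux
variable {F : Type*} [Field F]

/-- embedding of the last `n - k'` coordinates -/
def emb (n k' : ℕ) (h : k' ≤ n) : Fin (n - k') → Fin n :=
  fun j => ⟨k' + j, by have := j.isLt; omega⟩

lemma emb_injective (n k' : ℕ) (h : k' ≤ n) : Function.Injective (emb n k' h) := by
  intro a b hab
  have : k' + (a : ℕ) = k' + b := congrArg Fin.val hab
  exact Fin.ext (by omega)


lemma finrank_std (n k' : ℕ) (h : k' ≤ n) :
    finrank F (stdSubspace F n k' h) = k' := by
  have hli : LinearIndependent F
      (fun i : Fin k' => (Pi.single (Fin.castLE h i) (1 : F) : Fin n → F)) := by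
    have := (Pi.basisFun F (Fin n)).linearIndependent.comp (Fin.castLE h)
      (Fin.castLE_injective h)
    simpa [Function.comp_def, Pi.basisFun_apply] using this
  rw [stdSubspace, finrank_span_eq_card hli, Fintype.card_fin]

lemma std_eq_ker (n k' : ℕ) (h : k' ≤ n) :
    stdSubspace F n k' h = LinearMap.ker (LinearMap.funLeft F F (emb n k' h)) := by
  have hle : stdSubspace F n k' h ≤ LinearMap.ker (LinearMap.funLeft F F (emb n k' h)) := by
    rw [stdSubspace, span_le]
    rintro x ⟨i, rfl⟩
    simp only [SetLike.mem_coe, LinearMap.mem_ker]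
    funext j
    have hne : emb n k' h j ≠ Fin.castLE h i := by
      intro hEq
      have : k' + (j : ℕ) = (i : ℕ) := congrArg Fin.val hEq
      have := i.isLt; omega
    simp [LinearMap.funLeft_apply, Pi.single_apply, hne]
  have hsurj : Function.Surjective (LinearMap.funLeft F F (emb n k' h)) :=
    LinearMap.funLeft_surjective_of_injective F F _ (emb_injective n k' h)
  have h1 := (LinearMap.funLeft F F (emb n k' h)).finrank_range_add_finrank_ker
  rw [LinearMap.range_eq_top.mpr hsurj, finrank_top] at h1
  have hker : finrank F (LinearMap.ker (LinearMap.funLeft F F (emb n k' h))) = k' := by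
    have h2 : finrank F (Fin (n - k') → F) = n - k' := by simp
    have h3 : finrank F (Fin n → F) = n := by simp
    omega
  exact Submodule.eq_of_le_of_finrank_le hle (by rw [hker, finrank_std])

end aux

section aux2
variable {F : Type*} [Field F]


set_option synthInstance.maxHeartbeats 1000000 in
lemma finrank_inf_add_rank {k n k' : ℕ} (h : k' ≤ n) (V : Matrix (Fin k) (Fin n) F) :
    finrank F ↥(stdSubspace F n k' h ⊓ rowSpace F V)
      + (V.submatrix id (emb n k' h)).rank = finrank F ↥(rowSpace F V) := by
  set π := LinearMap.funLeft F F (emb n k' h) with hπ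
  set W := rowSpace F V with hW
  have hφ := (π.comp W.subtype).finrank_range_add_finrank_ker
  have hker : finrank F (LinearMap.ker (π.comp W.subtype))
      = finrank F ↥(stdSubspace F n k' h ⊓ W) := by
    rw [LinearMap.ker_comp, ← std_eq_ker]
    have hmap : Submodule.map W.subtype (Submodule.comap W.subtype (stdSubspace F n k' h))
        = W ⊓ stdSubspace F n k' h := Submodule.map_comap_subtype _ _
    have he : finrank F ↥(Submodule.comap W.subtype (stdSubspace F n k' h))
        = finrank F ↥(Submodule.map W.subtype
            (Submodule.comap W.subtype (stdSubspace F n k' h))) :=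
      (Submodule.equivMapOfInjective W.subtype (Submodule.injective_subtype W)
        (Submodule.comap W.subtype (stdSubspace F n k' h))).finrank_eq
    rw [he, hmap, inf_comm]
  have hrange : finrank F (LinearMap.range (π.comp W.subtype))
      = (V.submatrix id (emb n k' h)).rank := by
    rw [LinearMap.range_comp, Submodule.range_subtype]
    have hmapW : Submodule.map π W
        = Submodule.span F (Set.range fun i : Fin k => (V.submatrix id (emb n k' h)) i) := by
      rw [hW, rowSpace, Submodule.map_span, ← Set.range_comp]
      rfl
    rw [hmapW, Matrix.rank_eq_finrank_span_row, Matrix.row]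
  omega

end aux2

section aux3
variable {F : Type*} [Field F]

lemma rank_le_iff_minors {k n k' r : ℕ} (h : k' ≤ n) (V : Matrix (Fin k) (Fin n) F)
    (hV : V.rank = k) :
    (V.submatrix id (emb n k' h)).rank ≤ r ↔
      ∀ c : Fin k → Fin n, StrictMono c →
        r + 1 ≤ (Finset.univ.filter fun l : Fin k => k' ≤ (c l : ℕ)).card →
        (V.submatrix id c).det = 0 := by
  classical
  set B := V.submatrix id (emb n k' h) with hB
  constructor
  · intro hr c hc hcard
    by_contra hdet
    have hU : IsUnit (V.submatrix id c) := (Matrix.isUnit_iff_isUnit_det _).mpr (Ne.isUnit hdet)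
    have hcols : LinearIndependent F (fun l => (V.submatrix id c)ᵀ l) :=
      Matrix.linearIndependent_cols_iff_isUnit.mpr hU
    set S := (Finset.univ.filter fun l : Fin k => k' ≤ (c l : ℕ)) with hS
    set p := Submodule.span F (Set.range Bᵀ) with hp
    have hmem : ∀ x : {l // l ∈ S}, (V.submatrix id c)ᵀ (x : Fin k) ∈ p := by
      rintro ⟨l, hl⟩
      have hkl : k' ≤ (c l : ℕ) := (Finset.mem_filter.mp hl).2
      have hcl := (c l).isLt
      refine Submodule.subset_span ⟨⟨(c l : ℕ) - k', by omega⟩, ?_⟩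
      funext i
      show B i _ = V i (c l)
      simp only [hB, Matrix.submatrix_apply, id_eq]
      congr 1
      exact Fin.ext (by simp [emb]; omega)
    have hsub : LinearIndependent F
        (fun x : {l // l ∈ S} => (V.submatrix id c)ᵀ (x : Fin k)) :=
      hcols.comp _ Subtype.val_injective
    have hsub' : LinearIndependent F
        (fun x : {l // l ∈ S} => (⟨(V.submatrix id c)ᵀ (x : Fin k), hmem x⟩ : p)) := by
      apply LinearIndependent.of_comp p.subtype
      exact hsub
    have hle := hsub'.fintype_card_le_finrank
    rw [Fintype.card_coe] at hle
    have hfr : finrank F p = B.rank := (Matrix.rank_eq_finrank_span_cols B).symm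
    omega
  · intro hmin
    by_contra hr
    push_neg at hr
    -- construct a violating minor
    obtain ⟨s, hs_sub, hs_span, hs_li⟩ := exists_linearIndependent F (Set.range Bᵀ)
    have hs_fin : s.Finite := (Set.finite_range Bᵀ).subset hs_sub
    haveI := hs_fin.fintype
    have hcard_s : s.toFinset.card = B.rank := by
      rw [Matrix.rank_eq_finrank_span_cols, Matrix.col, ← hs_span, finrank_span_set_eq_card hs_li]
    have hBV : Set.range Bᵀ ⊆ Set.range Vᵀ := by
      rintro _ ⟨j, rfl⟩; exact ⟨emb n k' h j, rfl⟩
    have hsubT : s ⊆ Set.range Vᵀ := hs_sub.trans hBV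
    set b := LinearIndepOn.extend (v := id) hs_li hsubT with hb
    have hb_li : LinearIndependent F (Subtype.val : b → Fin k → F) :=
      LinearIndepOn.linearIndepOn_extend (v := id) hs_li hsubT
    have hb_sub : b ⊆ Set.range Vᵀ := LinearIndepOn.extend_subset (v := id) hs_li hsubT
    have hsb : s ⊆ b := LinearIndepOn.subset_extend (v := id) hs_li hsubT
    have hb_fin : b.Finite := (Set.finite_range Vᵀ).subset hb_sub
    haveI := hb_fin.fintype
    have hspan_top : Submodule.span F (Set.range Vᵀ) = ⊤ := by
      apply Submodule.eq_top_of_finrank_eq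
      rw [show Set.range Vᵀ = Set.range V.col from rfl, ← Matrix.rank_eq_finrank_span_cols, hV]
      simp
    have hspan_b : Submodule.span F b = ⊤ := by
      rw [LinearIndepOn.span_extend_eq_span hs_li hsubT, hspan_top]
    have hb_card : Fintype.card b = k := by
      have h1 := finrank_span_set_eq_card hb_li
      rw [hspan_b, finrank_top] at h1
      simp only [Set.toFinset_card] at h1
      simpa using h1.symm
    have hchoice : ∀ v : b, ∃ j : Fin n, Vᵀ j = (v : Fin k → F)
        ∧ ((v : Fin k → F) ∈ s → k' ≤ (j : ℕ)) := by
      rintro ⟨v, hv⟩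
      by_cases hvs : v ∈ s
      · obtain ⟨j, hj⟩ := hs_sub hvs
        refine ⟨emb n k' h j, ?_, fun _ => by simp [emb]⟩
        exact hj
      · obtain ⟨j, hj⟩ := hb_sub hv
        exact ⟨j, hj, fun hmem => absurd hmem hvs⟩
    choose c' hc'1 hc'2 using hchoice
    have hc'_inj : Function.Injective c' := by
      intro v w hvw
      apply Subtype.ext
      rw [← hc'1 v, ← hc'1 w, hvw]
    have ε : Fin k ≃ b := (Fintype.equivFinOfCardEq hb_card).symm
    set c0 : Fin k → Fin n := fun l => c' (ε l) with hc0
    have hc0_inj : Function.Injective c0 := hc'_inj.comp ε.injective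
    have hc0_cols : (fun l => (V.submatrix id c0)ᵀ l)
        = fun l => ((ε l : b) : Fin k → F) := by
      funext l
      exact hc'1 (ε l)
    have hc0_li : LinearIndependent F (fun l => (V.submatrix id c0)ᵀ l) := by
      rw [hc0_cols]
      exact hb_li.comp ε ε.injective
    have hdet0 : (V.submatrix id c0).det ≠ 0 := by
      intro hdet
      have : ¬ IsUnit (V.submatrix id c0) := by
        rw [Matrix.isUnit_iff_isUnit_det, hdet]
        simp
      exact this (Matrix.linearIndependent_cols_iff_isUnit.mp hc0_li)
    have hcard0 : r + 1 ≤ (Finset.univ.filter fun l : Fin k => k' ≤ (c0 l : ℕ)).card := by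
      have hg : ∀ v : s, k' ≤ ((c0 (ε.symm ⟨(v : Fin k → F), hsb v.2⟩)) : ℕ) := by
        intro v
        have : c0 (ε.symm ⟨(v : Fin k → F), hsb v.2⟩) = c' ⟨(v : Fin k → F), hsb v.2⟩ := by
          simp [hc0]
        rw [this]
        exact hc'2 _ v.2
      have hginj : Function.Injective
          (fun v : s => (⟨ε.symm ⟨(v : Fin k → F), hsb v.2⟩, hg v⟩
            : {l : Fin k // k' ≤ ((c0 l) : ℕ)})) := by
        intro v w hvw
        have h1 : ε.symm ⟨(v : Fin k → F), hsb v.2⟩ = ε.symm ⟨(w : Fin k → F), hsb w.2⟩ :=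
          congrArg Subtype.val hvw
        have h2 := ε.symm.injective h1
        have h3 : (v : Fin k → F) = w := by simpa using congrArg Subtype.val h2
        exact Subtype.ext h3
      have hle := Fintype.card_le_of_injective _ hginj
      rw [Fintype.card_subtype (p := fun l : Fin k => k' ≤ ((c0 l) : ℕ))] at hle
      have hcs : Fintype.card s = s.toFinset.card := (Set.toFinset_card s).symm
      omega
    set σ := Tuple.sort c0 with hσ
    have hmono : Monotone (c0 ∘ σ) := Tuple.monotone_sort c0
    have hsm : StrictMono (c0 ∘ σ) := hmono.strictMono_of_injective (hc0_inj.comp σ.injective)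
    have hcardσ : r + 1 ≤ (Finset.univ.filter fun l : Fin k => k' ≤ ((c0 ∘ σ) l : ℕ)).card := by
      refine le_trans hcard0 (le_of_eq ?_)
      apply Finset.card_equiv σ.symm
      intro l
      simp
    have hdetσ : (V.submatrix id (c0 ∘ σ)).det ≠ 0 := by
      have heq : V.submatrix id (c0 ∘ ⇑σ) = (V.submatrix id c0).submatrix id ⇑σ := by
        rw [Matrix.submatrix_submatrix]
        simp
      rw [heq, Matrix.det_permute']
      intro hcontra
      rcases Int.units_eq_one_or (Equiv.Perm.sign σ) with hs1 | hs1 <;>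
        rw [hs1] at hcontra <;> simp at hcontra <;> exact hdet0 hcontra
    exact hdetσ (hmin _ hsm hcardσ)

end aux3


/-- Theorem 4 (injection distance): for `U₀ = rs[I_{k'} | 0]` and
`|k'-k| ≤ t < min(max(k',k), n-k+1)`, a rank-`k` matrix `V`
satisfies `d_I(U₀, rs V) ≤ t` iff every `k×k` minor of `V` whose column set
contains at least `min(0, k-k') + t + 1` columns with index greater than `k'`
vanishes (equivalently, iff `M_{i₁,…,i_k}(V) = 0` for every tuple which is not
`⪯ (k'-max(k',k)+t+1, …, k', n-k+max(k',k)-t+1, …, n)` in the Bruhat order). -/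
theorem statement8 (F : Type*) [Field F] [Fintype F] (n k k' t : ℕ)
    (hk : 0 < k) (hk' : 0 < k') (hkn : k ≤ n) (hk'n : k' ≤ n)
    (ht1 : (k : ℤ) - (k' : ℤ) ≤ (t : ℤ)) (ht2 : (k' : ℤ) - (k : ℤ) ≤ (t : ℤ))
    (ht3 : (t : ℤ) < min (max (k' : ℤ) (k : ℤ)) ((n : ℤ) - (k : ℤ) + 1))
    (V : Matrix (Fin k) (Fin n) F) (hV : V.rank = k) :
    (max (Module.finrank F ↥(stdSubspace F n k' hk'n) : ℤ)
          (Module.finrank F ↥(rowSpace F V))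
        - Module.finrank F ↥(stdSubspace F n k' hk'n ⊓ rowSpace F V)
      ≤ (t : ℤ))
    ↔ ∀ c : Fin k → Fin n, StrictMono c →
        (t - (k' - k)) + 1 ≤
          (Finset.univ.filter fun l : Fin k => k' ≤ (c l : ℕ)).card →
        (V.submatrix id c).det = 0 := by
  have h1 : finrank F (stdSubspace F n k' hk'n) = k' := finrank_std n k' hk'n
  have h2 : finrank F (rowSpace F V) = k := by
    rw [rowSpace]
    exact (Matrix.rank_eq_finrank_span_row V).symm.trans hV
  have h3 := finrank_inf_add_rank hk'n V
  rw [h2] at h3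
  rw [h1, h2]
  constructor
  · intro hle
    have hrank : (V.submatrix id (emb n k' hk'n)).rank ≤ t - (k' - k) := by omega
    exact (rank_le_iff_minors hk'n V hV).mp hrank
  · intro hmin
    have hrank := (rank_le_iff_minors hk'n V hV).mpr hmin
    omega
end

section
/- Let q be a prime power, let 0 < k', k ≤ n, let A be an invertible n×n matrix over F_q, and let R = rs([ I_{k'} | 0 ]·A) be the k'-dimensional subspace obtained by applying v ↦ vA to the row space of [ I_{k'} | 0 ]. Let τ satisfy |k − k'| ≤ τ < min(k' + k, 2n − (k' + k)) with (k + k' − τ)/2 ∈ ℤ. Then for every k×n matrix V over F_q of rank k, d_S(R, rs(V)) ≤ τ if and only if M_{i₁,…,i_k}(V·A⁻¹) = 0 for every index tuple (i₁ < … < i_k) that is NOT ⪯ ((k'−k+τ)/2 + 1, …, k', n − (k−k'+τ)/2 + 1, …, n) in the Bruhat order. -/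
open Matrix Submodule Module Set

section Aux
variable {F : Type*} [Field F]

lemma mem_stdSubspace_iff {n k' : ℕ} (h : k' ≤ n) (v : Fin n → F) :
    v ∈ stdSubspace F n k' h ↔ ∀ j : Fin n, k' ≤ (j : ℕ) → v j = 0 := by
  constructor
  · intro hv
    induction hv using Submodule.span_induction with
    | mem x hx =>
      obtain ⟨i, rfl⟩ := hx
      intro j hj
      apply Pi.single_eq_of_ne
      intro hje
      have h1 : (j : ℕ) = (i : ℕ) := by rw [hje]; rfl
      have h2 : (i : ℕ) < k' := i.isLt
      omega
    | zero => intro j _; rfl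
    | add x y _ _ hx hy => intro j hj; simp [hx j hj, hy j hj]
    | smul a x _ hx => intro j hj; simp [hx j hj]
  · intro hv
    have hrep : v = ∑ j : Fin n, v j • (Pi.single j (1 : F) : Fin n → F) := by
      funext x
      rw [Finset.sum_apply]
      simp [Pi.single_apply]
    rw [hrep]
    apply Submodule.sum_mem
    intro j _
    by_cases hj : k' ≤ (j : ℕ)
    · rw [hv j hj]; simp
    · have hj' : (j : ℕ) < k' := by omega
      have hc : j = Fin.castLE h ⟨(j : ℕ), hj'⟩ := by ext; rfl
      apply Submodule.smul_mem
      rw [hc]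
      exact Submodule.subset_span ⟨⟨(j : ℕ), hj'⟩, rfl⟩

lemma finrank_stdSubspace_s11 {n k' : ℕ} (h : k' ≤ n) :
    finrank F (stdSubspace F n k' h) = k' := by
  have hli : LinearIndependent F
      (fun i : Fin k' => (Pi.single (Fin.castLE h i) (1 : F) : Fin n → F)) := by
    have hb := (Pi.basisFun F (Fin n)).linearIndependent
    have heq : (fun j : Fin n => (Pi.single j (1 : F) : Fin n → F)) = ⇑(Pi.basisFun F (Fin n)) := by
      funext j
      exact (Pi.basisFun_apply F (Fin n) j).symm
    have : (fun i : Fin k' => (Pi.single (Fin.castLE h i) (1 : F) : Fin n → F))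
        = (fun j : Fin n => (Pi.single j (1 : F) : Fin n → F)) ∘ Fin.castLE h := rfl
    rw [this, heq]
    exact hb.comp _ (Fin.castLE_injective h)
  exact (finrank_span_eq_card hli).trans (Fintype.card_fin k')

lemma finrank_rowSpace {k n : ℕ} (M : Matrix (Fin k) (Fin n) F) :
    finrank F (rowSpace F M) = Mᵀ.rank := by
  rw [rowSpace, Matrix.rank_eq_finrank_span_cols]; rfl

lemma rowSpace_mul {k n : ℕ} (M : Matrix (Fin k) (Fin n) F) (A : Matrix (Fin n) (Fin n) F) :
    rowSpace F (M * A) = (rowSpace F M).map A.vecMulLinear := by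
  rw [rowSpace, rowSpace, Submodule.map_span, ← Set.range_comp]
  have : (⇑A.vecMulLinear ∘ fun i : Fin k => M i) = fun i : Fin k => (M * A) i := by
    funext i j
    simp [Matrix.mul_apply, Matrix.vecMul, dotProduct, Matrix.vecMulLinear_apply]
  rw [this]




lemma rank_le_iff_minors_s11 {n k k' t : ℕ} (hk : 0 < k) (hkn : k ≤ n)
    (W W₂ : Matrix (Fin k) (Fin n) F)
    (hWtop : Submodule.span F (Set.range Wᵀ) = ⊤)
    (hW₂ : ∀ i j, W₂ i j = if k' ≤ (j : ℕ) then W i j else 0) :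
    finrank F (Submodule.span F (Set.range W₂ᵀ)) ≤ t ↔
      ∀ c : Fin k → Fin n, StrictMono c →
        t + 1 ≤ (Finset.univ.filter fun l : Fin k => k' ≤ ((c l : ℕ))).card →
        (W.submatrix id c).det = 0 := by
  classical
  have hW₂col : ∀ j : Fin n, k' ≤ (j : ℕ) → W₂ᵀ j = Wᵀ j := by
    intro j hj; funext i; simp [Matrix.transpose_apply, hW₂, hj]
  have hW₂col0 : ∀ j : Fin n, ¬ k' ≤ (j : ℕ) → W₂ᵀ j = 0 := by
    intro j hj; funext i; simp [Matrix.transpose_apply, hW₂, hj]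
  set Q := Submodule.span F (Set.range W₂ᵀ) with hQ
  constructor
  · intro hrank c hmono hcard
    by_contra hdet
    have hU : IsUnit (W.submatrix id c) :=
      (Matrix.isUnit_iff_isUnit_det _).mpr (isUnit_iff_ne_zero.mpr hdet)
    have hli : LinearIndependent F fun l : Fin k => Wᵀ (c l) := by
      have := Matrix.linearIndependent_cols_iff_isUnit.mpr hU
      exact this
    set s : Finset (Fin k) := Finset.univ.filter fun l : Fin k => k' ≤ ((c l : ℕ)) with hs
    have hmem : ∀ l : s, Wᵀ (c (l : Fin k)) ∈ Q := by
      rintro ⟨l, hl⟩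
      have hlk : k' ≤ ((c l : ℕ)) := (Finset.mem_filter.mp hl).2
      rw [← hW₂col _ hlk]
      exact Submodule.subset_span ⟨c l, rfl⟩
    have hli2 : LinearIndependent F fun l : s => (⟨Wᵀ (c (l : Fin k)), hmem l⟩ : Q) := by
      apply LinearIndependent.of_comp Q.subtype
      exact hli.comp Subtype.val Subtype.val_injective
    have hle := hli2.fintype_card_le_finrank
    rw [Fintype.card_coe] at hle
    omega
  · intro hminor
    by_contra hrank
    push_neg at hrank
    obtain ⟨b, hbsub, hbspan, hbind⟩ := exists_linearIndependent F (Set.range W₂ᵀ)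
    have hbfin : b.Finite := hbind.setFinite
    haveI := hbfin.fintype
    have hbcard : finrank F Q = b.toFinset.card := by
      rw [hQ, ← hbspan]; exact finrank_span_set_eq_card hbind
    have hb0 : ∀ v ∈ b, v ≠ (0 : Fin k → F) := fun v hv => hbind.ne_zero ⟨v, hv⟩
    have hbidx : ∀ v ∈ b, ∃ j : Fin n, Wᵀ j = v ∧ k' ≤ (j : ℕ) := by
      intro v hv
      obtain ⟨j, hj⟩ := hbsub hv
      by_cases hjk : k' ≤ (j : ℕ)
      · exact ⟨j, by rw [← hj, hW₂col _ hjk], hjk⟩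
      · exact absurd (by rw [← hj, hW₂col0 _ hjk]) (hb0 v hv)
    have hbW : b ⊆ Set.range Wᵀ := by
      intro v hv
      obtain ⟨j, hj, -⟩ := hbidx v hv
      exact ⟨j, hj⟩
    obtain ⟨B, hBW, hbB, hWspanB, hBind'⟩ := exists_linearIndepOn_extension (v := id) hbind hbW
    simp only [Set.image_id] at hWspanB
    have hBind : LinearIndependent F ((↑) : B → (Fin k → F)) := hBind'
    have hBtop : Submodule.span F B = ⊤ := by
      apply eq_top_iff.mpr
      rw [← hWtop]
      exact Submodule.span_le.mpr hWspanB
    have hBfin : B.Finite := hBind.setFinite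
    haveI := hBfin.fintype
    have hBcard : B.toFinset.card = k := by
      have h1 := finrank_span_set_eq_card hBind
      rw [hBtop, finrank_top] at h1
      rw [← h1]
      simp [Module.finrank_pi]
    have hn0 : 0 < n := lt_of_lt_of_le hk hkn
    have hch : ∀ v ∈ B, ∃ j : Fin n, Wᵀ j = v ∧ (v ∈ b → k' ≤ (j : ℕ)) := by
      intro v hv
      by_cases hvb : v ∈ b
      · obtain ⟨j, hj1, hj2⟩ := hbidx v hvb
        exact ⟨j, hj1, fun _ => hj2⟩
      · obtain ⟨j, hj⟩ := hBW hv
        exact ⟨j, hj, fun h => absurd h hvb⟩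
    choose g hg1 hg2 using hch
    let G : (Fin k → F) → Fin n := fun v => if h : v ∈ B then g v h else ⟨0, hn0⟩
    have hG1 : ∀ v ∈ B, Wᵀ (G v) = v := by
      intro v hv; simp only [G, dif_pos hv]; exact hg1 v hv
    have hG2 : ∀ v ∈ B, v ∈ b → k' ≤ ((G v : ℕ)) := by
      intro v hv hvb; simp only [G, dif_pos hv]; exact hg2 v hv hvb
    set S : Finset (Fin n) := B.toFinset.image G with hSdef
    have hGinjB : Set.InjOn G B.toFinset := by
      intro u hu v hv huv
      rw [← hG1 u (Set.mem_toFinset.mp hu), ← hG1 v (Set.mem_toFinset.mp hv), huv]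
    have hScard : S.card = k := by
      rw [hSdef, Finset.card_image_of_injOn hGinjB, Set.toFinset_card, ← Set.toFinset_card, hBcard]
    have hS : ∀ j ∈ S, Wᵀ j ∈ B ∧ G (Wᵀ j) = j := by
      intro j hj
      obtain ⟨v, hv, rfl⟩ := Finset.mem_image.mp hj
      have hv' : v ∈ B := Set.mem_toFinset.mp hv
      rw [hG1 v hv']
      exact ⟨hv', rfl⟩
    set c0 := S.orderIsoOfFin hScard with hc0
    set c : Fin k → Fin n := fun l => ((c0 l : Fin n)) with hcdef
    have hcS : ∀ l, c l ∈ S := fun l => (c0 l).2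
    have hcmono : StrictMono c := fun a b hab => Subtype.coe_lt_coe.mpr (c0.strictMono hab)
    -- count
    have hcount : t + 1 ≤ (Finset.univ.filter fun l : Fin k => k' ≤ ((c l : ℕ))).card := by
      have hbB' : b.toFinset ⊆ B.toFinset := by
        intro v hv
        exact Set.mem_toFinset.mpr (hbB (Set.mem_toFinset.mp hv))
      have h1 : t + 1 ≤ (b.toFinset.image G).card := by
        rw [Finset.card_image_of_injOn (hGinjB.mono (by exact_mod_cast hbB'))]
        omega
      refine le_trans h1 (Finset.card_le_card_of_injOn
        (fun j => if h : j ∈ S then c0.symm ⟨j, h⟩ else ⟨0, hk⟩) ?_ ?_)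
      · intro j hj
        obtain ⟨v, hv, rfl⟩ := Finset.mem_image.mp hj
        have hv' : v ∈ b := Set.mem_toFinset.mp hv
        have hjS : G v ∈ S := Finset.mem_image_of_mem G (hbB' hv)
        simp only [dif_pos hjS]
        apply Finset.mem_filter.mpr
        refine ⟨Finset.mem_univ _, ?_⟩
        have : c (c0.symm ⟨G v, hjS⟩) = G v := by
          rw [hcdef]
          simp
        rw [this]
        exact hG2 v (hbB hv') hv'
      · intro j1 hj1 j2 hj2 he
        have hj1S : j1 ∈ S := by
          obtain ⟨v, hv, rfl⟩ := Finset.mem_image.mp hj1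
          exact Finset.mem_image_of_mem G (hbB' hv)
        have hj2S : j2 ∈ S := by
          obtain ⟨v, hv, rfl⟩ := Finset.mem_image.mp hj2
          exact Finset.mem_image_of_mem G (hbB' hv)
        simp only [dif_pos hj1S, dif_pos hj2S] at he
        have := congrArg (fun x => ((c0 x : Fin n))) he
        simpa using this
    -- determinant nonzero
    have hdet := hminor c hcmono hcount
    have hmemB : ∀ l : Fin k, Wᵀ (c l) ∈ B := fun l => (hS _ (hcS l)).1
    have hinj : Function.Injective fun l : Fin k => (⟨Wᵀ (c l), hmemB l⟩ : B) := by
      intro l1 l2 h12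
      have h1 : Wᵀ (c l1) = Wᵀ (c l2) := congrArg Subtype.val h12
      have h2 : G (Wᵀ (c l1)) = G (Wᵀ (c l2)) := congrArg G h1
      rw [(hS _ (hcS l1)).2, (hS _ (hcS l2)).2] at h2
      exact hcmono.injective h2
    have hliB : LinearIndependent F fun l : Fin k => Wᵀ (c l) := by
      have := hBind.comp _ hinj
      exact this
    have hU : IsUnit (W.submatrix id c) := by
      apply Matrix.linearIndependent_cols_iff_isUnit.mp
      exact hliB
    exact (isUnit_iff_ne_zero.mp ((Matrix.isUnit_iff_isUnit_det _).mp hU)) hdet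

end Aux

set_option maxHeartbeats 1000000 in
set_option synthInstance.maxHeartbeats 200000 in
/-- For an invertible matrix `A` and `R = rs([I_{k'} | 0]·A)`, with
`|k-k'| ≤ τ < min(k'+k, 2n-(k'+k))` and `k+k'-τ` even, a rank-`k` matrix `V`
satisfies `d_S(R, rs V) ≤ τ` iff `M_{i₁,…,i_k}(V·A⁻¹) = 0` for every strictly
increasing tuple which is not
`⪯ ((k'-k+τ)/2+1, …, k', n-(k-k'+τ)/2+1, …, n)` in the Bruhat order
(equivalently, whose column set contains at least `(k-k'+τ)/2 + 1` indices
greater than `k'`). -/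
theorem statement11 (F : Type*) [Field F] [Fintype F] (n k k' τ : ℕ)
    (hk : 0 < k) (hk' : 0 < k') (hkn : k ≤ n) (hk'n : k' ≤ n)
    (A : Matrix (Fin n) (Fin n) F) (hA : IsUnit A)
    (hτ1 : (k : ℤ) - (k' : ℤ) ≤ (τ : ℤ)) (hτ2 : (k' : ℤ) - (k : ℤ) ≤ (τ : ℤ))
    (hτ3 : (τ : ℤ) < min ((k' : ℤ) + (k : ℤ)) (2 * (n : ℤ) - ((k' : ℤ) + (k : ℤ))))
    (hpar : Even ((k : ℤ) + (k' : ℤ) - (τ : ℤ)))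
    (V : Matrix (Fin k) (Fin n) F) (hV : V.rank = k) :
    ((Module.finrank F ↥((stdSubspace F n k' hk'n).map A.vecMulLinear) : ℤ)
        + Module.finrank F ↥(rowSpace F V)
        - 2 * Module.finrank F
            ↥((stdSubspace F n k' hk'n).map A.vecMulLinear ⊓ rowSpace F V)
      ≤ (τ : ℤ))
    ↔ ∀ c : Fin k → Fin n, StrictMono c →
        (k + τ - k') / 2 + 1 ≤
          (Finset.univ.filter fun l : Fin k => k' ≤ (c l : ℕ)).card →
        ((V * A⁻¹).submatrix id c).det = 0 := by
  classical
  have hAdet : IsUnit A.det := (Matrix.isUnit_iff_isUnit_det A).mp hA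
  set W : Matrix (Fin k) (Fin n) F := V * A⁻¹ with hWdef
  have hVW : V = W * A := (Matrix.nonsing_inv_mul_cancel_right A V hAdet).symm
  have hrankW : W.rank = k := by
    rw [hWdef, Matrix.rank_mul_eq_left_of_isUnit_det A⁻¹ V
      (Matrix.isUnit_nonsing_inv_det A hAdet)]
    exact hV
  have hWtop : Submodule.span F (Set.range Wᵀ) = ⊤ := by
    apply Submodule.eq_top_of_finrank_eq
    rw [show Set.range Wᵀ = Set.range W.col from rfl, ← Matrix.rank_eq_finrank_span_cols, hrankW]
    simp
  have hinjA : Function.Injective A.vecMulLinear := by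
    rw [Matrix.coe_vecMulLinear]
    exact Matrix.vecMul_injective_iff_isUnit.mpr hA
  have hfr1 : finrank F ((stdSubspace F n k' hk'n).map A.vecMulLinear) = k' := by
    rw [← (Submodule.equivMapOfInjective _ hinjA (stdSubspace F n k' hk'n)).finrank_eq]
    exact finrank_stdSubspace_s11 hk'n
  have hfr2 : finrank F (rowSpace F V) = k := by
    rw [finrank_rowSpace, Matrix.rank_transpose]
    exact hV
  have hmapW : rowSpace F V = (rowSpace F W).map A.vecMulLinear := by
    conv_lhs => rw [hVW]
    exact rowSpace_mul W A
  set d : ℕ := finrank F ↥(stdSubspace F n k' hk'n ⊓ rowSpace F W) with hddef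
  have hfr3 : finrank F ↥((stdSubspace F n k' hk'n).map A.vecMulLinear ⊓ rowSpace F V)
      = d := by
    rw [hmapW, ← Submodule.map_inf _ hinjA,
      ← (Submodule.equivMapOfInjective _ hinjA _).finrank_eq]
  -- projection map
  set f : (Fin n → F) →ₗ[F] (Fin n → F) :=
    LinearMap.pi (fun j : Fin n => if k' ≤ (j : ℕ) then LinearMap.proj j else 0) with hfdef
  have hfapp : ∀ (v : Fin n → F) (j : Fin n), f v j = if k' ≤ (j : ℕ) then v j else 0 := by
    intro v j
    rw [hfdef]
    simp only [LinearMap.pi_apply]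
    by_cases hj : k' ≤ (j : ℕ) <;> simp [hj]
  have hkerf : LinearMap.ker f = stdSubspace F n k' hk'n := by
    ext v
    rw [LinearMap.mem_ker, mem_stdSubspace_iff, funext_iff]
    constructor
    · intro h j hj
      have := h j
      rw [hfapp, if_pos hj] at this
      exact this
    · intro h j
      rw [hfapp]
      by_cases hj : k' ≤ (j : ℕ)
      · rw [if_pos hj]
        exact (h j hj).trans rfl
      · rw [if_neg hj]
        rfl
  set W₂ : Matrix (Fin k) (Fin n) F :=
    Matrix.of (fun i j => if k' ≤ (j : ℕ) then W i j else 0) with hW₂def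
  have hW₂app : ∀ i j, W₂ i j = if k' ≤ (j : ℕ) then W i j else 0 := fun i j => rfl
  have hmapf : (rowSpace F W).map f = rowSpace F W₂ := by
    rw [rowSpace, rowSpace, Submodule.map_span, ← Set.range_comp]
    have hco : (⇑f ∘ fun i : Fin k => W i) = fun i : Fin k => W₂ i := by
      funext i j
      rw [Function.comp_apply, hfapp, hW₂app]
    rw [hco]
  set r : ℕ := finrank F (Submodule.span F (Set.range W₂ᵀ)) with hrdef
  have hfrW₂ : finrank F ↥(rowSpace F W₂) = r := by
    rw [finrank_rowSpace, Matrix.rank_transpose, hrdef,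
      show Set.range W₂ᵀ = Set.range W₂.col from rfl, ← Matrix.rank_eq_finrank_span_cols]
  -- rank-nullity
  have hrn := LinearMap.finrank_range_add_finrank_ker (f.domRestrict (rowSpace F W))
  have hrange : finrank F ↥(LinearMap.range (f.domRestrict (rowSpace F W))) = r := by
    rw [LinearMap.range_domRestrict, hmapf, hfrW₂]
  have hker : finrank F ↥(LinearMap.ker (f.domRestrict (rowSpace F W))) = d := by
    have h1 : LinearMap.ker (f.domRestrict (rowSpace F W))
        = Submodule.comap (rowSpace F W).subtype (LinearMap.ker f) := by
      show LinearMap.ker (f.comp (rowSpace F W).subtype) = _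
      rw [LinearMap.ker_comp]
    rw [h1]
    have e := Submodule.equivMapOfInjective (rowSpace F W).subtype
      (Submodule.injective_subtype (rowSpace F W))
      (Submodule.comap (rowSpace F W).subtype (LinearMap.ker f))
    rw [Submodule.map_comap_subtype] at e
    rw [hkerf] at e ⊢
    rw [e.finrank_eq, inf_comm]
  have hfrW : finrank F ↥(rowSpace F W) = k := by
    rw [finrank_rowSpace, Matrix.rank_transpose, hrankW]
  have hsum : r + d = k := by
    rw [hrange, hker, hfrW] at hrn
    exact hrn
  have hcomb := rank_le_iff_minors_s11 (F := F) (t := (k + τ - k') / 2) hk hkn W W₂ hWtop hW₂app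
  rw [hfr1, hfr2, hfr3, ← hcomb, ← hrdef]
  obtain ⟨m, hm⟩ := hpar
  omega
end

section
/- Let q be a prime power, let 0 < k', k ≤ n, let U₀ = rs[ I_{k'} | 0_{k'×(n−k')} ], let t satisfy |k−k'| ≤ t, and set ω = min(0, k − k') + t. Then a k-dimensional subspace 𝒱 of F_q^n lies in the ball B_{I,t}^k(U₀) (i.e., d_I(U₀, 𝒱) ≤ t) if and only if 𝒱 = rs[ V₁ | V₂ ] for some V₁ ∈ F_q^{k×k'} and some V₂ ∈ F_q^{k×(n−k')} of the form V₂ = X·Y with X ∈ F_q^{k×ω} and Y ∈ F_q^{ω×(n−k')} (equivalently, with rank(V₂) ≤ ω), where [ V₁ | V₂ ] has rank k. -/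
lemma std_eq_ker_s14 (F : Type*) [Field F] (n k' : ℕ) (h : k' ≤ n) :
    stdSubspace F n k' h =
      LinearMap.ker (LinearMap.funLeft F F
        (fun j : Fin (n - k') => (⟨k' + j, by omega⟩ : Fin n))) := by
  apply le_antisymm
  · rw [stdSubspace, Submodule.span_le]
    rintro _ ⟨i, rfl⟩
    simp only [SetLike.mem_coe, LinearMap.mem_ker]
    funext j
    simp only [LinearMap.funLeft_apply, Pi.zero_apply]
    rw [Pi.single_apply]
    rw [if_neg]
    intro hij
    have : (k' : ℕ) + (j : ℕ) = (i : ℕ) := by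
      have := congrArg Fin.val hij
      simpa using this
    have := i.isLt
    omega
  · intro v hv
    simp only [LinearMap.mem_ker] at hv
    have hv' : ∀ j : Fin n, k' ≤ (j : ℕ) → v j = 0 := by
      intro j hj
      have hlt : (j : ℕ) - k' < n - k' := by have := j.isLt; omega
      have := congrFun hv ⟨(j : ℕ) - k', hlt⟩
      simp only [LinearMap.funLeft_apply, Pi.zero_apply] at this
      convert this using 2
      ext
      simp
      omega
    have hvsum : v = ∑ j : Fin n, Pi.single j (v j) := by
      rw [Finset.univ_sum_single]
    rw [hvsum]
    apply Submodule.sum_mem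
    intro j _
    by_cases hj : (j : ℕ) < k'
    · have : Pi.single j (v j) = v j • (Pi.single j (1 : F) : Fin n → F) := by
        rw [← Pi.single_smul, smul_eq_mul, mul_one]
      rw [this]
      apply Submodule.smul_mem
      apply Submodule.subset_span
      exact ⟨⟨(j : ℕ), hj⟩, by congr 1⟩
    · rw [hv' j (by omega), Pi.single_zero]
      exact Submodule.zero_mem _

lemma std_finrank (F : Type*) [Field F] (n k' : ℕ) (h : k' ≤ n) :
    Module.finrank F ↥(stdSubspace F n k' h) = k' := by
  rw [stdSubspace]
  have hli : LinearIndependent F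
      (fun i : Fin k' => (Pi.single (Fin.castLE h i) (1 : F) : Fin n → F)) := by
    have := (Pi.basisFun F (Fin n)).linearIndependent
    have h2 := this.comp (Fin.castLE h) (Fin.castLE_injective h)
    convert h2 using 1
    funext i
    simp [Pi.basisFun_apply]
  rw [finrank_span_eq_card hli]
  simp

lemma key_count (F : Type*) [Field F] {n k k' : ℕ} (hk'n : k' ≤ n)
    (W : Matrix (Fin k) (Fin n) F) (hrank : W.rank = k) :
    Module.finrank F ↥(stdSubspace F n k' hk'n ⊓ Submodule.span F (Set.range W))
      + (Matrix.of fun (i : Fin k) (j : Fin (n - k')) =>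
          W i ⟨k' + j, by have := j.isLt; omega⟩).rank = k := by
  set g : Fin (n - k') → Fin n := fun j => ⟨k' + j, by have := j.isLt; omega⟩ with hg
  set V₂ : Matrix (Fin k) (Fin (n - k')) F := Matrix.of fun i j => W i (g j) with hV₂
  set L : (Fin k → F) →ₗ[F] (Fin n → F) := W.vecMulLinear with hL
  set π : (Fin n → F) →ₗ[F] (Fin (n - k') → F) := LinearMap.funLeft F F g with hπ
  have hrangeL : LinearMap.range L = Submodule.span F (Set.range W) :=
    range_vecMulLinear W
  have hinjL : Function.Injective L := by
    rw [← LinearMap.ker_eq_bot]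
    have h1 := LinearMap.finrank_range_add_finrank_ker L
    rw [hrangeL] at h1
    rw [← show Set.range W.row = Set.range W from rfl, ← Matrix.rank_eq_finrank_span_row, hrank] at h1
    simp only [Module.finrank_fintype_fun_eq_card, Fintype.card_fin] at h1
    have : Module.finrank F ↥(LinearMap.ker L) = 0 := by omega
    exact Submodule.finrank_eq_zero.mp this
  have hcomp : π ∘ₗ L = V₂.vecMulLinear := by
    apply LinearMap.ext
    intro c
    funext j
    simp [hL, hπ, hV₂, Matrix.vecMul, dotProduct]
  have hrn := LinearMap.finrank_range_add_finrank_ker (π ∘ₗ L)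
  simp only [Module.finrank_fintype_fun_eq_card, Fintype.card_fin] at hrn
  have hker : LinearMap.ker (π ∘ₗ L) = Submodule.comap L (LinearMap.ker π) :=
    LinearMap.ker_comp L π
  have hmapker : Submodule.map L (LinearMap.ker (π ∘ₗ L))
      = LinearMap.ker π ⊓ LinearMap.range L := by
    rw [hker, Submodule.map_comap_eq]
    exact inf_comm _ _
  have hfr1 : Module.finrank F ↥(LinearMap.ker (π ∘ₗ L))
      = Module.finrank F ↥(LinearMap.ker π ⊓ LinearMap.range L) := by
    rw [← hmapker]
    exact (Submodule.equivMapOfInjective L hinjL _).finrank_eq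
  have hfr2 : Module.finrank F ↥(LinearMap.range (π ∘ₗ L)) = V₂.rank := by
    rw [hcomp, range_vecMulLinear, Matrix.rank_eq_finrank_span_row]
  have hstd : stdSubspace F n k' hk'n = LinearMap.ker π := std_eq_ker_s14 F n k' hk'n
  rw [hstd, ← hrangeL, ← hfr1, ← hfr2]
  omega

lemma factor_rank {F : Type*} [Field F] {k m ω : ℕ} (M : Matrix (Fin k) (Fin m) F)
    (h : M.rank ≤ ω) :
    ∃ (X : Matrix (Fin k) (Fin ω) F) (Y : Matrix (Fin ω) (Fin m) F), M = X * Y := by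
  set R : Submodule F (Fin m → F) := Submodule.span F (Set.range M) with hR
  have hr : Module.finrank F R ≤ ω := by
    rw [Matrix.rank_eq_finrank_span_row] at h
    exact h
  set r := Module.finrank F R with hrdef
  let b : Module.Basis (Fin r) F R := Module.finBasis F R
  have hmem : ∀ i : Fin k, M i ∈ R := fun i =>
    Submodule.subset_span (Set.mem_range_self i)
  refine ⟨Matrix.of fun i j => if hj : (j : ℕ) < r then
      b.repr ⟨M i, hmem i⟩ ⟨j, hj⟩ else 0,
    Matrix.of fun j l => if hj : (j : ℕ) < r then (b ⟨j, hj⟩ : Fin m → F) l else 0, ?_⟩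
  funext i l
  have hsum := b.sum_repr ⟨M i, hmem i⟩
  have hsum' : M i l = ∑ j : Fin r, b.repr ⟨M i, hmem i⟩ j * (b j : Fin m → F) l := by
    have := congrArg (fun x : R => (x : Fin m → F) l) hsum
    simp only at this
    rw [← this]
    push_cast
    rw [Finset.sum_apply]
    simp
  rw [Matrix.mul_apply]
  simp only [Matrix.of_apply]
  rw [hsum']
  set c := fun j : Fin r => b.repr ⟨M i, hmem i⟩ j with hc
  set d := fun j : Fin r => (b j : Fin m → F) l with hd
  set G : ℕ → F := fun x => if hj : x < r then c ⟨x, hj⟩ * d ⟨x, hj⟩ else 0 with hG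
  have h1 : ∑ j : Fin r, c j * d j = ∑ x ∈ Finset.range r, G x := by
    rw [← Fin.sum_univ_eq_sum_range G r]
    apply Finset.sum_congr rfl
    intro j _
    simp [hG, j.isLt]
  have h2 : ∑ x : Fin ω,
      (if hj : (x : ℕ) < r then c ⟨x, hj⟩ else 0) *
        (if hj : (x : ℕ) < r then d ⟨x, hj⟩ else 0)
      = ∑ x ∈ Finset.range ω, G x := by
    rw [← Fin.sum_univ_eq_sum_range G ω]
    apply Finset.sum_congr rfl
    intro x _
    by_cases hx : (x : ℕ) < r <;> simp [hG, hx]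
  have h3 : ∑ x ∈ Finset.range r, G x = ∑ x ∈ Finset.range ω, G x := by
    apply Finset.sum_subset (Finset.range_subset_range.mpr hr)
    intro x _ hx
    simp only [Finset.mem_range, not_lt] at hx
    exact dif_neg (by omega)
  rw [h1, h3, ← h2]

/-- Rational parametrization of the ball `B_{I,t}^k(U₀)`: for
`|k-k'| ≤ t` and `ω = min(0, k-k') + t` (i.e. `ω = t - (k'-k)` truncated),
a `k`-dimensional subspace `𝒱` of `F^n` satisfies `d_I(U₀, 𝒱) ≤ t` iff
`𝒱 = rs[V₁ | V₂]` for some `V₁ ∈ F^{k×k'}` and `V₂ = X·Y` with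
`X ∈ F^{k×ω}`, `Y ∈ F^{ω×(n-k')}`, where `[V₁ | V₂]` has rank `k`. -/
theorem statement14 (F : Type*) [Field F] [Fintype F] (n k k' t : ℕ)
    (hk : 0 < k) (hk' : 0 < k') (hkn : k ≤ n) (hk'n : k' ≤ n)
    (ht1 : (k : ℤ) - (k' : ℤ) ≤ (t : ℤ)) (ht2 : (k' : ℤ) - (k : ℤ) ≤ (t : ℤ))
    (𝒱 : Submodule F (Fin n → F)) (h𝒱 : Module.finrank F 𝒱 = k) :
    (max (Module.finrank F ↥(stdSubspace F n k' hk'n) : ℤ)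
          (Module.finrank F 𝒱)
        - Module.finrank F ↥(stdSubspace F n k' hk'n ⊓ 𝒱)
      ≤ (t : ℤ))
    ↔ ∃ (V₁ : Matrix (Fin k) (Fin k') F)
        (X : Matrix (Fin k) (Fin (t - (k' - k))) F)
        (Y : Matrix (Fin (t - (k' - k))) (Fin (n - k')) F)
        (W : Matrix (Fin k) (Fin n) F),
        (∀ (i : Fin k) (j : Fin n),
          W i j = if h : (j : ℕ) < k' then V₁ i ⟨(j : ℕ), h⟩
            else (X * Y) i ⟨(j : ℕ) - k', by have := j.isLt; omega⟩)
        ∧ W.rank = k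
        ∧ 𝒱 = Submodule.span F (Set.range fun i : Fin k => W i) := by
  constructor
  · intro hle
    let b := Module.finBasisOfFinrankEq F 𝒱 h𝒱
    set W : Matrix (Fin k) (Fin n) F := Matrix.of fun i => (b i : Fin n → F) with hWdef
    have hspan : Submodule.span F (Set.range W) = 𝒱 := by
      have h1 : Set.range W = ⇑𝒱.subtype '' Set.range ⇑b := by
        rw [← Set.range_comp]; rfl
      rw [h1, ← Submodule.map_span, b.span_eq, Submodule.map_top, Submodule.range_subtype]
    have hrankW : W.rank = k := by
      rw [Matrix.rank_eq_finrank_span_row, show Set.range W.row = Set.range W from rfl, hspan, h𝒱]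
    set V₂ : Matrix (Fin k) (Fin (n - k')) F :=
      Matrix.of fun i j => W i ⟨k' + j, by have := j.isLt; omega⟩ with hV₂def
    have hkey : Module.finrank F ↥(stdSubspace F n k' hk'n ⊓ 𝒱) + V₂.rank = k := by
      have := key_count F hk'n W hrankW
      rwa [hspan] at this
    rw [std_finrank, h𝒱] at hle
    have hV₂le : V₂.rank ≤ t - (k' - k) := by
      rw [sub_le_iff_le_add, max_le_iff] at hle
      omega
    obtain ⟨X, Y, hXY⟩ := factor_rank V₂ hV₂le
    refine ⟨Matrix.of fun i (j : Fin k') => W i (Fin.castLE hk'n j), X, Y, W,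
      ?_, hrankW, hspan.symm⟩
    intro i j
    by_cases hj : (j : ℕ) < k'
    · rw [dif_pos hj]
      simp only [Matrix.of_apply]
      congr 1
    · rw [dif_neg hj, ← hXY]
      simp only [hV₂def, Matrix.of_apply]
      congr 1
      simp [Fin.ext_iff]
      omega
  · rintro ⟨V₁, X, Y, W, hWdef, hrankW, hspan⟩
    have hspan' : Submodule.span F (Set.range W) = 𝒱 := hspan.symm
    have hkey := key_count F hk'n W hrankW
    rw [hspan'] at hkey
    have hV₂ : (Matrix.of fun (i : Fin k) (j : Fin (n - k')) =>
        W i ⟨k' + j, by have := j.isLt; omega⟩) = X * Y := by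
      funext i j
      rw [Matrix.of_apply, hWdef i ⟨k' + j, by have := j.isLt; omega⟩]
      rw [dif_neg (by simp)]
      congr 1
      simp [Fin.ext_iff]
    rw [hV₂] at hkey
    have h1 : (X * Y).rank ≤ t - (k' - k) :=
      le_trans (Matrix.rank_mul_le_left X Y) (Matrix.rank_le_width X)
    rw [std_finrank, h𝒱, sub_le_iff_le_add, max_le_iff]
    constructor <;> (push_cast; omega)
end

section
/- Let q be a prime power, let 0 < k', k ≤ n, let A be an invertible n×n matrix over F_q with block decomposition A = [[R₁, R₂],[R₃, R₄]] where R₁ ∈ F_q^{k'×k'} and R₂ ∈ F_q^{k'×(n−k')}, and let R = rs[ R₁ | R₂ ] = rs([ I_{k'} | 0 ]·A). Let τ satisfy |k−k'| ≤ τ with (k+k'−τ)/2 ∈ ℤ and set ν = (k−k'+τ)/2. Then a k-dimensional subspace 𝒱 of F_q^n satisfies d_S(R, 𝒱) ≤ τ if and only if there exist V₁ ∈ F_q^{k×k'}, X ∈ F_q^{k×ν}, Y ∈ F_q^{ν×(n−k')} such that 𝒱 = rs[ V₁R₁ + XY·R₃ | V₁R₂ + XY·R₄ ] (and the latter matrix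 has rank k). -/
open Matrix Submodule Module

/-- A matrix of rank ≤ ν factors through F^ν. -/
lemma st15_factor {F : Type*} [Field F] {k m ν : ℕ} (U : Matrix (Fin k) (Fin m) F)
    (h : U.rank ≤ ν) : ∃ (X : Matrix (Fin k) (Fin ν) F) (Y : Matrix (Fin ν) (Fin m) F),
    U = X * Y := by
  classical
  set S := Submodule.span F (Set.range U) with hS
  have hfr : finrank F S ≤ ν := by
    rw [hS]; erw [← Matrix.rank_eq_finrank_span_row]; exact h
  let b : Basis (Fin (finrank F S)) F S := Module.finBasis F S
  let y : Fin ν → (Fin m → F) := fun j =>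
    if hj : (j : ℕ) < finrank F S then (b ⟨j, hj⟩ : Fin m → F) else 0
  have hmem : ∀ i, U i ∈ Submodule.span F (Set.range y) := by
    intro i
    have h1 : U i ∈ S := Submodule.subset_span ⟨i, rfl⟩
    have h2 : S ≤ Submodule.span F (Set.range y) := by
      conv_lhs => rw [← Submodule.map_subtype_top S, ← b.span_eq]
      rw [Submodule.map_span, ← Set.range_comp]
      apply Submodule.span_mono
      rintro _ ⟨l, rfl⟩
      exact ⟨⟨l, l.2.trans_le hfr⟩, by simp [y, l.2]⟩
    exact h2 h1
  choose c hc using fun i => (mem_span_range_iff_exists_fun F).mp (hmem i)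
  refine ⟨fun i j => c i j, fun j => y j, ?_⟩
  ext i j'
  rw [← hc i]
  simp [Matrix.mul_apply, Finset.sum_apply, Pi.smul_apply, smul_eq_mul]
  exact Matrix.mul_apply.symm

/-- Row space of `M * A` is the image of the row space of `M` under `v ↦ v ᵥ* A`. -/
lemma st15_span_rows_mul {F : Type*} [Field F] {k n n' : Type*} [Fintype k] [Fintype n]
    (M : Matrix k n F) (A : Matrix n n' F) :
    Submodule.span F (Set.range (M * A)) =
      Submodule.map A.vecMulLinear (Submodule.span F (Set.range M)) := by
  have : (M * A).vecMulLinear = A.vecMulLinear.comp M.vecMulLinear := by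
    ext v; simp [Matrix.vecMul_vecMul]
  erw [← range_vecMulLinear, ← range_vecMulLinear, this, LinearMap.range_comp]

/-- Rational parametrization of the ball around an arbitrary subspace
`R = rs[R₁ | R₂] = rs([I_{k'} | 0]·A)` where `A = [[R₁,R₂],[R₃,R₄]]` is
invertible: for `|k-k'| ≤ τ` with `k+k'-τ` even and `ν = (k-k'+τ)/2`, a
`k`-dimensional subspace `𝒱` of `F^n` (with `n = k' + m`) satisfies
`d_S(R, 𝒱) ≤ τ` iff there exist `V₁ ∈ F^{k×k'}`, `X ∈ F^{k×ν}`,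
`Y ∈ F^{ν×m}` with `𝒱 = rs[V₁R₁ + XY·R₃ | V₁R₂ + XY·R₄]`, the latter matrix
having rank `k`. -/
theorem statement15 (F : Type*) [Field F] [Fintype F] (k k' m τ : ℕ)
    (hk : 0 < k) (hk' : 0 < k') (hkm : k ≤ k' + m)
    (R₁ : Matrix (Fin k') (Fin k') F) (R₂ : Matrix (Fin k') (Fin m) F)
    (R₃ : Matrix (Fin m) (Fin k') F) (R₄ : Matrix (Fin m) (Fin m) F)
    (hA : IsUnit (Matrix.fromBlocks R₁ R₂ R₃ R₄))
    (hτ1 : (k : ℤ) - (k' : ℤ) ≤ (τ : ℤ)) (hτ2 : (k' : ℤ) - (k : ℤ) ≤ (τ : ℤ))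
    (hpar : Even ((k : ℤ) + (k' : ℤ) - (τ : ℤ)))
    (𝒱 : Submodule F (Fin k' ⊕ Fin m → F)) (h𝒱 : Module.finrank F 𝒱 = k) :
    ((Module.finrank F
          ↥(Submodule.span F
              (Set.range fun i : Fin k' => Matrix.fromCols R₁ R₂ i)) : ℤ)
        + Module.finrank F 𝒱
        - 2 * Module.finrank F
            ↥(Submodule.span F
                (Set.range fun i : Fin k' => Matrix.fromCols R₁ R₂ i) ⊓ 𝒱)
      ≤ (τ : ℤ))
    ↔ ∃ (V₁ : Matrix (Fin k) (Fin k') F)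
        (X : Matrix (Fin k) (Fin ((k + τ - k') / 2)) F)
        (Y : Matrix (Fin ((k + τ - k') / 2)) (Fin m) F),
        𝒱 = Submodule.span F (Set.range fun i : Fin k =>
            Matrix.fromCols (V₁ * R₁ + X * Y * R₃) (V₁ * R₂ + X * Y * R₄) i)
        ∧ (Matrix.fromCols (V₁ * R₁ + X * Y * R₃)
            (V₁ * R₂ + X * Y * R₄)).rank = k := by
  classical
  obtain ⟨t, ht⟩ := hpar
  set A := Matrix.fromBlocks R₁ R₂ R₃ R₄ with hAdef
  set R : Submodule F (Fin k' ⊕ Fin m → F) :=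
    Submodule.span F (Set.range fun i : Fin k' => Matrix.fromCols R₁ R₂ i) with hRdef
  have hdet : IsUnit A.det := (Matrix.isUnit_iff_isUnit_det A).mp hA
  set B : Matrix (Fin k' ⊕ Fin m) (Fin k' ⊕ Fin m) F := ↑hA.unit⁻¹ with hBdef
  have hAB : A * B = 1 := hA.mul_val_inv
  have hBA : B * A = 1 := hA.val_inv_mul
  have hinj : Function.Injective A.vecMulLinear := by
    intro u v huv
    have : (A.vecMulLinear u) ᵥ* B = (A.vecMulLinear v) ᵥ* B := by rw [huv]
    simpa [Matrix.vecMul_vecMul, hAB] using this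
  -- the projection to the right-hand coordinates
  set π : ((Fin k' ⊕ Fin m) → F) →ₗ[F] (Fin m → F) := LinearMap.funLeft F F Sum.inr with hπdef
  -- the standard subspace W
  set W : Submodule F (Fin k' ⊕ Fin m → F) :=
    Submodule.span F (Set.range (Matrix.fromCols (1 : Matrix (Fin k') (Fin k') F) 0))
    with hWdef
  have hIA : Matrix.fromCols (1 : Matrix (Fin k') (Fin k') F) (0 : Matrix (Fin k') (Fin m) F) * A
      = Matrix.fromCols R₁ R₂ := by
    rw [hAdef, Matrix.fromCols_mul_fromBlocks]; simp
  have hR : R = W.map A.vecMulLinear := by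
    rw [hRdef, hWdef, ← st15_span_rows_mul, hIA]
  have hWker : W = LinearMap.ker π := by
    apply le_antisymm
    · rw [hWdef, Submodule.span_le]
      rintro _ ⟨w, rfl⟩
      simp only [SetLike.mem_coe, LinearMap.mem_ker]
      ext j
      simp [hπdef, LinearMap.funLeft, Matrix.vecMul, dotProduct,
        Matrix.fromCols]
    · intro v hv
      have hv' : ∀ j, v (Sum.inr j) = 0 := fun j => congr_fun (LinearMap.mem_ker.mp hv) j
      rw [hWdef]; erw [← range_vecMulLinear]
      refine ⟨fun i => v (Sum.inl i), ?_⟩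
      ext (j | j)
      · simp [Matrix.vecMul, dotProduct, Matrix.fromCols, Matrix.one_apply]
      · simp [Matrix.vecMul, dotProduct, Matrix.fromCols, hv' j]
  -- finrank R = k'
  have hfrR : Module.finrank F ↥R = k' := by
    have h1 : (Matrix.fromCols R₁ R₂).rank
        = Module.finrank F ↥(Submodule.span F (Set.range (Matrix.fromCols R₁ R₂))) :=
      Matrix.rank_eq_finrank_span_row _
    have h2 : LinearIndependent F (Matrix.fromCols (1 : Matrix (Fin k') (Fin k') F)
        (0 : Matrix (Fin k') (Fin m) F)) := by
      erw [Fintype.linearIndependent_iff]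
      intro g hg i
      have := congr_fun hg (Sum.inl i)
      simpa [Finset.sum_apply, Matrix.fromCols, Matrix.one_apply, Finset.sum_ite_eq']
        using this
    have h3 : (Matrix.fromCols R₁ R₂).rank = k' := by
      rw [← hIA, Matrix.rank_mul_eq_left_of_isUnit_det A _ hdet,
        LinearIndependent.rank_matrix (M := Matrix.fromCols (1 : Matrix (Fin k') (Fin k') F)
          (0 : Matrix (Fin k') (Fin m) F)) h2, Fintype.card_fin]
    rw [hRdef]
    exact h1 ▸ h3
  -- the core dimension computation
  have core : ∀ (U₁ : Matrix (Fin k) (Fin k') F) (U₂ : Matrix (Fin k) (Fin m) F),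
      𝒱 = Submodule.span F (Set.range (Matrix.fromCols U₁ U₂ * A)) →
      Module.finrank F ↥(R ⊓ 𝒱) + U₂.rank = k := by
    intro U₁ U₂ h
    set S := Submodule.span F (Set.range (Matrix.fromCols U₁ U₂)) with hSdef
    have h𝒱S : 𝒱 = S.map A.vecMulLinear := by rw [h, st15_span_rows_mul]
    have hfrmap : ∀ p : Submodule F (Fin k' ⊕ Fin m → F),
        Module.finrank F ↥(p.map A.vecMulLinear) = Module.finrank F ↥p := by
      intro p
      exact ((Submodule.equivMapOfInjective _ hinj p).finrank_eq).symm
    have hinf : R ⊓ 𝒱 = (W ⊓ S).map A.vecMulLinear := by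
      rw [hR, h𝒱S, Submodule.map_inf _ hinj]
    have hrn := LinearMap.finrank_range_add_finrank_ker (π.domRestrict S)
    have hrange : LinearMap.range (π.domRestrict S) = S.map π :=
      LinearMap.range_domRestrict S π
    have hmapπ : S.map π = Submodule.span F (Set.range U₂) := by
      rw [hSdef, Submodule.map_span]; erw [← Set.range_comp]
      congr 1
    have hker : Module.finrank F ↥(LinearMap.ker (π.domRestrict S))
        = Module.finrank F ↥(W ⊓ S) := by
      rw [LinearMap.ker_domRestrict]
      have heq : Submodule.comap S.subtype (LinearMap.ker π)
          = Submodule.comap S.subtype (W ⊓ S) := by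
        rw [← hWker, Submodule.comap_inf, Submodule.comap_subtype_self, inf_top_eq]
      rw [heq]
      exact (Submodule.comapSubtypeEquivOfLe inf_le_right).finrank_eq
    have hfrS : Module.finrank F ↥S = k := by
      rw [← hfrmap S, ← h𝒱S, h𝒱]
    have hrk : Module.finrank F ↥(S.map π) = U₂.rank := by
      rw [hmapπ]; exact (Matrix.rank_eq_finrank_span_row _).symm
    rw [hinf, hfrmap]
    rw [hrange, hker, hfrS, hrk] at hrn
    omega
  constructor
  · intro hle
    -- build a generator matrix from a basis of 𝒱
    let b : Basis (Fin k) F 𝒱 := Module.finBasisOfFinrankEq F 𝒱 h𝒱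
    set M : Matrix (Fin k) (Fin k' ⊕ Fin m) F := fun i => (b i : Fin k' ⊕ Fin m → F)
      with hMdef
    have hspan : 𝒱 = Submodule.span F (Set.range M) := by
      conv_lhs => rw [← Submodule.map_subtype_top 𝒱, ← b.span_eq]
      rw [Submodule.map_span, ← Set.range_comp]
      rfl
    set U : Matrix (Fin k) (Fin k' ⊕ Fin m) F := M * B with hUdef
    have hUA : Matrix.fromCols (Matrix.toCols₁ U) (Matrix.toCols₂ U) * A = M := by
      rw [Matrix.fromCols_toCols, hUdef, Matrix.mul_assoc, hBA, Matrix.mul_one]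
    have hcore := core _ _ (by rw [hUA]; exact hspan)
    rw [hfrR, h𝒱] at hle
    have hν : (Matrix.toCols₂ U).rank ≤ (k + τ - k') / 2 := by omega
    obtain ⟨X, Y, hXY⟩ := st15_factor _ hν
    refine ⟨Matrix.toCols₁ U, X, Y, ?_, ?_⟩
    · have hblock : Matrix.fromCols (Matrix.toCols₁ U * R₁ + X * Y * R₃)
          (Matrix.toCols₁ U * R₂ + X * Y * R₄) = M := by
        rw [← hXY, ← hUA, hAdef, Matrix.fromCols_mul_fromBlocks]
      rw [hblock]; exact hspan
    · have hblock : Matrix.fromCols (Matrix.toCols₁ U * R₁ + X * Y * R₃)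
          (Matrix.toCols₁ U * R₂ + X * Y * R₄) = M := by
        rw [← hXY, ← hUA, hAdef, Matrix.fromCols_mul_fromBlocks]
      rw [hblock]
      have hli : LinearIndependent F M :=
        b.linearIndependent.map' 𝒱.subtype (Submodule.ker_subtype 𝒱)
      rw [hli.rank_matrix, Fintype.card_fin]
  · rintro ⟨V₁, X, Y, h1, h2⟩
    have hblock : Matrix.fromCols (V₁ * R₁ + X * Y * R₃) (V₁ * R₂ + X * Y * R₄)
        = Matrix.fromCols V₁ (X * Y) * A := by
      rw [hAdef, Matrix.fromCols_mul_fromBlocks]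
    rw [hblock] at h1
    have hcore := core _ _ h1
    have hrk : (X * Y).rank ≤ (k + τ - k') / 2 :=
      le_trans (Matrix.rank_mul_le_right X Y) (Matrix.rank_le_height Y)
    rw [hfrR, h𝒱]
    omega
end

section
/- Let q be a prime power, let k ≤ n − k, and let A and B be k×(n−k) matrices over F_q. Then the subspace distance between the liftings satisfies d_S( rs[ I_k | A ], rs[ I_k | B ] ) = 2·rank(A − B), and the injection distance satisfies d_I( rs[ I_k | A ], rs[ I_k | B ] ) = rank(A − B). Consequently, if C is a set of k×(n−k) matrices over F_q in which any two distinct elements A, B satisfy rank(A−B) ≥ δ, then the lifted code { rs[ I_k | A ] : A ∈ C } is a set of k-dimensional subspaces of F_q^n of the same cardinality as C with minimum pairwise subspace distance at least 2δ. -/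
/-- The lifting of a `k × m` matrix `A`: the row space of `[I_k | A]`,
a subspace of `F^(k+m)` (ambient index type `Fin k ⊕ Fin m`). -/
def lifting (F : Type*) [Field F] (k m : ℕ) (A : Matrix (Fin k) (Fin m) F) :
    Submodule F (Fin k ⊕ Fin m → F) :=
  Submodule.span F (Set.range fun i : Fin k =>
    Matrix.fromCols (1 : Matrix (Fin k) (Fin k) F) A i)

open Matrix

lemma lifting_eq_range (F : Type*) [Field F] (k m : ℕ) (A : Matrix (Fin k) (Fin m) F) :
    lifting F k m A
      = LinearMap.range (fromCols (1 : Matrix (Fin k) (Fin k) F) A).vecMulLinear := by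
  rw [range_vecMulLinear]; rfl

lemma vecMulLinear_fromColumns_apply (F : Type*) [Field F] (k m : ℕ)
    (A : Matrix (Fin k) (Fin m) F) (x : Fin k → F) :
    (fromCols (1 : Matrix (Fin k) (Fin k) F) A).vecMulLinear x
      = Sum.elim x (x ᵥ* A) := by
  rw [Matrix.vecMulLinear_apply, Matrix.vecMul_fromCols, Matrix.vecMul_one]

lemma injective_L (F : Type*) [Field F] (k m : ℕ) (A : Matrix (Fin k) (Fin m) F) :
    Function.Injective (fromCols (1 : Matrix (Fin k) (Fin k) F) A).vecMulLinear := by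
  intro x y h
  rw [vecMulLinear_fromColumns_apply, vecMulLinear_fromColumns_apply] at h
  have := congrArg (fun v => v ∘ Sum.inl) h
  simpa using this

lemma finrank_lifting (F : Type*) [Field F] (k m : ℕ) (A : Matrix (Fin k) (Fin m) F) :
    Module.finrank F ↥(lifting F k m A) = k := by
  rw [lifting_eq_range, LinearMap.finrank_range_of_inj (injective_L F k m A)]
  simp

lemma inter_eq_map (F : Type*) [Field F] (k m : ℕ) (A B : Matrix (Fin k) (Fin m) F) :
    lifting F k m A ⊓ lifting F k m B
      = Submodule.map (fromCols (1 : Matrix (Fin k) (Fin k) F) A).vecMulLinear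
          (LinearMap.ker (A - B).vecMulLinear) := by
  rw [lifting_eq_range, lifting_eq_range]
  ext v
  simp only [Submodule.mem_inf, Submodule.mem_map, LinearMap.mem_range, LinearMap.mem_ker]
  constructor
  · rintro ⟨⟨x, hx⟩, ⟨y, hy⟩⟩
    rw [vecMulLinear_fromColumns_apply] at hx hy
    have hxy : x = y := by
      have := congrArg (fun v => v ∘ Sum.inl) (hx.trans hy.symm)
      simpa using this
    subst hxy
    have hAB : x ᵥ* A = x ᵥ* B := by
      have := congrArg (fun v => v ∘ Sum.inr) (hx.trans hy.symm)
      simpa using this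
    refine ⟨x, ?_, by rw [vecMulLinear_fromColumns_apply]; exact hx⟩
    rw [Matrix.vecMulLinear_apply, Matrix.vecMul_sub, hAB, sub_self]
  · rintro ⟨x, hker, rfl⟩
    rw [Matrix.vecMulLinear_apply, Matrix.vecMul_sub, sub_eq_zero] at hker
    exact ⟨⟨x, rfl⟩, ⟨x, by rw [vecMulLinear_fromColumns_apply,
      vecMulLinear_fromColumns_apply, hker]⟩⟩

lemma finrank_inter (F : Type*) [Field F] (k m : ℕ) (A B : Matrix (Fin k) (Fin m) F) :
    Module.finrank F ↥(lifting F k m A ⊓ lifting F k m B) = k - (A - B).rank := by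
  rw [inter_eq_map]
  rw [← LinearEquiv.finrank_eq
    (Submodule.equivMapOfInjective _ (injective_L F k m A) _)]
  have hrn := LinearMap.finrank_range_add_finrank_ker (A - B).vecMulLinear
  have hrank : Module.finrank F ↥(LinearMap.range (A - B).vecMulLinear) = (A - B).rank := by
    rw [← Matrix.mulVecLin_transpose, ← Matrix.rank_transpose]
    rfl
  rw [hrank] at hrn
  simp only [Module.finrank_pi, Fintype.card_fin] at hrn
  omega

lemma rank_le_k (F : Type*) [Field F] (k m : ℕ) (A B : Matrix (Fin k) (Fin m) F) :
    (A - B).rank ≤ k := by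
  simpa using Matrix.rank_le_card_height (A - B)

/-- `d_S(rs[I|A], rs[I|B]) = 2·rank(A-B)` and `d_I(rs[I|A], rs[I|B]) = rank(A-B)`;
consequently lifting a rank-metric code with minimum rank distance `δ` yields a
constant dimension code of the same cardinality, of dimension `k`, with minimum
subspace distance at least `2δ`. -/
theorem statement19 (F : Type*) [Field F] [Fintype F] (k m : ℕ) (hkm : k ≤ m) :
    (∀ A B : Matrix (Fin k) (Fin m) F,
      ((Module.finrank F ↥(lifting F k m A) : ℤ)
          + Module.finrank F ↥(lifting F k m B)
          - 2 * Module.finrank F ↥(lifting F k m A ⊓ lifting F k m B)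
        = 2 * ((A - B).rank : ℤ))
      ∧ (max (Module.finrank F ↥(lifting F k m A) : ℤ)
            (Module.finrank F ↥(lifting F k m B))
          - Module.finrank F ↥(lifting F k m A ⊓ lifting F k m B)
        = ((A - B).rank : ℤ)))
    ∧ ∀ (δ : ℕ) (C : Set (Matrix (Fin k) (Fin m) F)),
        (∀ A ∈ C, ∀ B ∈ C, A ≠ B → δ ≤ (A - B).rank) →
        Set.InjOn (lifting F k m) C
        ∧ (∀ A ∈ C, Module.finrank F ↥(lifting F k m A) = k)
        ∧ ∀ A ∈ C, ∀ B ∈ C, A ≠ B →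
            2 * (δ : ℤ) ≤ (Module.finrank F ↥(lifting F k m A) : ℤ)
                + Module.finrank F ↥(lifting F k m B)
                - 2 * Module.finrank F ↥(lifting F k m A ⊓ lifting F k m B) := by
  have main : ∀ A B : Matrix (Fin k) (Fin m) F,
      ((Module.finrank F ↥(lifting F k m A) : ℤ)
          + Module.finrank F ↥(lifting F k m B)
          - 2 * Module.finrank F ↥(lifting F k m A ⊓ lifting F k m B)
        = 2 * ((A - B).rank : ℤ))
      ∧ (max (Module.finrank F ↥(lifting F k m A) : ℤ)
            (Module.finrank F ↥(lifting F k m B))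
          - Module.finrank F ↥(lifting F k m A ⊓ lifting F k m B)
        = ((A - B).rank : ℤ)) := by
    intro A B
    have hr := rank_le_k F k m A B
    rw [finrank_lifting, finrank_lifting, finrank_inter]
    constructor <;> [skip; rw [max_self]] <;> push_cast [Nat.cast_sub hr] <;> ring
  refine ⟨main, fun δ C hC => ⟨?_, fun A _ => finrank_lifting F k m A, fun A hA B hB hAB => ?_⟩⟩
  · intro A hA B hB h
    ext i j
    have hrow : Matrix.fromCols (1 : Matrix (Fin k) (Fin k) F) A i ∈ lifting F k m B := by
      rw [← h]
      exact Submodule.subset_span ⟨i, rfl⟩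
    rw [lifting_eq_range] at hrow
    obtain ⟨y, hy⟩ := hrow
    rw [vecMulLinear_fromColumns_apply] at hy
    have hyi : y = Pi.single i 1 := by
      funext j'
      have := congrFun hy (Sum.inl j')
      simpa [Matrix.fromCols, Matrix.one_apply, Pi.single_apply, eq_comm] using this
    have := congrFun hy (Sum.inr j)
    rw [hyi] at this
    simpa [Matrix.fromCols, Matrix.single_one_vecMul] using this.symm
  · have := hC A hA B hB hAB
    rw [(main A B).1]
    exact_mod_cast Nat.mul_le_mul_left 2 this
end
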